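/- Let $W_1 : \mathbb{R} \to \mathbb{R}^{d \times p}$ and $W_2 : \mathbb{R} \to \mathbb{R}^{p \times c}$ be differentiable matrix-valued functions satisfying $W_1'(t) = -A(t) W_2(t)^T$ and $W_2'(t) = -W_1(t)^T A(t)$ for some common matrix-valued function $A(t) \in \mathbb{R}^{d \times c}$. Then $W_1(t)^T W_1(t) - W_2(t) W_2(t)^T$ is constant in $t$. -/

import Mathlib

open Matrix

theorem stmt4 (d p c : ℕ)
    (W1 : ℝ → Matrix (Fin d) (Fin p) ℝ) (W2 : ℝ → Matrix (Fin p) (Fin c) ℝ)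
    (A : ℝ → Matrix (Fin d) (Fin c) ℝ)
    (h1 : ∀ i j t, HasDerivAt (fun t => W1 t i j) ((-(A t * (W2 t)ᵀ)) i j) t)
    (h2 : ∀ i j t, HasDerivAt (fun t => W2 t i j) ((-((W1 t)ᵀ * A t)) i j) t) :
    ∀ t s : ℝ, (W1 t)ᵀ * W1 t - W2 t * (W2 t)ᵀ = (W1 s)ᵀ * W1 s - W2 s * (W2 s)ᵀ := by
  intro t s
  have key : ∀ i j, ∀ u : ℝ, HasDerivAt
      (fun u => (∑ k, W1 u k i * W1 u k j) - ∑ k, W2 u i k * W2 u j k) 0 u := by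
    intro i j u
    have H : HasDerivAt (fun u => (∑ k, W1 u k i * W1 u k j) - ∑ k, W2 u i k * W2 u j k)
        ((∑ k, ((-(A u * (W2 u)ᵀ)) k i * W1 u k j + W1 u k i * (-(A u * (W2 u)ᵀ)) k j))
         - ∑ k, ((-((W1 u)ᵀ * A u)) i k * W2 u j k + W2 u i k * (-((W1 u)ᵀ * A u)) j k)) u := by
      apply HasDerivAt.sub
      · exact HasDerivAt.fun_sum fun k _ => (h1 k i u).mul (h1 k j u)
      · exact HasDerivAt.fun_sum fun k _ => (h2 i k u).mul (h2 j k u)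
    have e : ((∑ k, ((-(A u * (W2 u)ᵀ)) k i * W1 u k j + W1 u k i * (-(A u * (W2 u)ᵀ)) k j))
         - ∑ k, ((-((W1 u)ᵀ * A u)) i k * W2 u j k + W2 u i k * (-((W1 u)ᵀ * A u)) j k)) = 0 := by
      simp only [Matrix.neg_apply, Matrix.mul_apply, Matrix.transpose_apply, neg_mul, mul_neg,
        Finset.sum_mul, Finset.mul_sum, Finset.sum_neg_distrib, sub_neg_eq_add, neg_add_rev]
      rw [sub_eq_zero]
      simp only [← Finset.sum_neg_distrib, ← Finset.sum_add_distrib]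
      rw [Finset.sum_comm]
      exact Finset.sum_congr rfl fun k _ => Finset.sum_congr rfl fun l _ => by ring
    rwa [e] at H
  have const : ∀ i j, ((∑ k, W1 t k i * W1 t k j) - ∑ k, W2 t i k * W2 t j k)
      = ((∑ k, W1 s k i * W1 s k j) - ∑ k, W2 s i k * W2 s j k) := fun i j =>
    is_const_of_deriv_eq_zero (fun u => (key i j u).differentiableAt)
      (fun u => (key i j u).deriv) t s
  ext i j
  simpa [Matrix.sub_apply, Matrix.mul_apply, Matrix.transpose_apply] using const i j
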